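/- For every B ∈ (0,1) and every x ∈ (-1,-B), the function U satisfies (LU)(x) = -c₁(1+x)/2, and consequently (LU)(x) ≥ -c₁(1-x)/2, where (Lf)(x) = (μ²/2)·(1-x²)²·f''(x). -/

import Mathlib

noncomputable section

/-- The function `U₁(x) = (c₁(1-x)/(4μ²))·(ln((1+x)/(1-x)) + 2/(1-B²))`. -/
def U₁ (μ c₁ B x : ℝ) : ℝ :=
  c₁ * (1 - x) / (4 * μ ^ 2) * (Real.log ((1 + x) / (1 - x)) + 2 / (1 - B ^ 2))

/-- The function `U` of the switching problem: `U(x) = U₁(x)` for `x ∈ (-B, 1]` and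
`U(x) = U₁(-x) + c₂` for `x ∈ (-1, -B]`. -/
def Ufun (μ c₁ c₂ B x : ℝ) : ℝ :=
  if -B < x then U₁ μ c₁ B x else U₁ μ c₁ B (-x) + c₂

/-- Smooth representative of `Ufun` on `(-1,-B)`. -/
def Vf (μ c₁ c₂ B y : ℝ) : ℝ :=
  c₁ * (1 + y) / (4 * μ ^ 2) * ((Real.log (1 - y) - Real.log (1 + y)) + 2 / (1 - B ^ 2)) + c₂

/-- Its first derivative. -/
def Vf' (μ c₁ B y : ℝ) : ℝ :=
  c₁ / (4 * μ ^ 2) * ((Real.log (1 - y) - Real.log (1 + y)) + 2 / (1 - B ^ 2))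
    + c₁ * (1 + y) / (4 * μ ^ 2) * (-(1 - y)⁻¹ - (1 + y)⁻¹)

/-- Its second derivative. -/
def Vf'' (μ c₁ B y : ℝ) : ℝ :=
  -c₁ / μ ^ 2 / ((1 + y) * (1 - y) ^ 2)

lemma hasDeriv_V (μ c₁ c₂ B : ℝ) {x : ℝ} (h1 : -1 < x) (h2 : x < 1) :
    HasDerivAt (Vf μ c₁ c₂ B) (Vf' μ c₁ B x) x := by
  have hm : (0:ℝ) < 1 - x := by linarith
  have hp : (0:ℝ) < 1 + x := by linarith
  have h1m : HasDerivAt (fun y : ℝ => 1 - y) (-1) x := (hasDerivAt_id x).const_sub 1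
  have h1p : HasDerivAt (fun y : ℝ => 1 + y) 1 x := (hasDerivAt_id x).const_add 1
  have hlogm : HasDerivAt (fun y : ℝ => Real.log (1 - y)) (-1 / (1 - x)) x :=
    h1m.log hm.ne'
  have hlogp : HasDerivAt (fun y : ℝ => Real.log (1 + y)) (1 / (1 + x)) x :=
    h1p.log hp.ne'
  have hP : HasDerivAt (fun y : ℝ => c₁ * (1 + y) / (4 * μ ^ 2)) (c₁ / (4 * μ ^ 2)) x := by
    have := (h1p.const_mul c₁).div_const (4 * μ ^ 2)
    refine this.congr_deriv ?_; ring
  have hQ : HasDerivAt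
      (fun y : ℝ => (Real.log (1 - y) - Real.log (1 + y)) + 2 / (1 - B ^ 2))
      (-1 / (1 - x) - 1 / (1 + x)) x :=
    (hlogm.sub hlogp).add_const _
  have := (hP.mul hQ).add_const c₂
  refine this.congr_deriv ?_
  unfold Vf'
  field_simp

lemma hasDeriv_V' (μ c₁ B : ℝ) (hμ : μ ≠ 0) {x : ℝ} (h1 : -1 < x) (h2 : x < 1) :
    HasDerivAt (Vf' μ c₁ B) (Vf'' μ c₁ B x) x := by
  have hm : (0:ℝ) < 1 - x := by linarith
  have hp : (0:ℝ) < 1 + x := by linarith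
  have h1m : HasDerivAt (fun y : ℝ => 1 - y) (-1) x := (hasDerivAt_id x).const_sub 1
  have h1p : HasDerivAt (fun y : ℝ => 1 + y) 1 x := (hasDerivAt_id x).const_add 1
  have hlogm : HasDerivAt (fun y : ℝ => Real.log (1 - y)) (-1 / (1 - x)) x :=
    h1m.log hm.ne'
  have hlogp : HasDerivAt (fun y : ℝ => Real.log (1 + y)) (1 / (1 + x)) x :=
    h1p.log hp.ne'
  have hQ : HasDerivAt
      (fun y : ℝ => (Real.log (1 - y) - Real.log (1 + y)) + 2 / (1 - B ^ 2))
      (-1 / (1 - x) - 1 / (1 + x)) x :=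
    (hlogm.sub hlogp).add_const _
  have hT1 : HasDerivAt
      (fun y : ℝ => c₁ / (4 * μ ^ 2) * ((Real.log (1 - y) - Real.log (1 + y)) + 2 / (1 - B ^ 2)))
      (c₁ / (4 * μ ^ 2) * (-1 / (1 - x) - 1 / (1 + x))) x := hQ.const_mul _
  have hP : HasDerivAt (fun y : ℝ => c₁ * (1 + y) / (4 * μ ^ 2)) (c₁ / (4 * μ ^ 2)) x := by
    have := (h1p.const_mul c₁).div_const (4 * μ ^ 2)
    refine this.congr_deriv ?_; ring
  have hinvm : HasDerivAt (fun y : ℝ => (1 - y)⁻¹) ((1 - x) ^ 2)⁻¹ x := by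
    have := h1m.inv hm.ne'
    refine this.congr_deriv ?_
    field_simp
  have hinvp : HasDerivAt (fun y : ℝ => (1 + y)⁻¹) (-((1 + x) ^ 2)⁻¹) x := by
    have := h1p.inv hp.ne'
    refine this.congr_deriv ?_
    field_simp
  have hR : HasDerivAt (fun y : ℝ => -(1 - y)⁻¹ - (1 + y)⁻¹)
      (-((1 - x) ^ 2)⁻¹ - -((1 + x) ^ 2)⁻¹) x := hinvm.neg.sub hinvp
  have hT2 := hP.mul hR
  have := hT1.add hT2
  refine this.congr_deriv ?_
  unfold Vf''
  field_simp
  ring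

/-- For every `B ∈ (0,1)` and every `x ∈ (-1,-B)`, the function `U`
satisfies `(LU)(x) = -c₁(1+x)/2`, and consequently `(LU)(x) ≥ -c₁(1-x)/2`, where
`(Lf)(x) = (μ²/2)(1-x²)² f''(x)`. -/
theorem LU_on_switching (μ c₀ c₁ c₂ : ℝ) (hμ : 0 < μ) (hc₀ : 0 < c₀) (hc₁ : 0 < c₁)
    (hc₂ : 0 < c₂) (B : ℝ) (hB : B ∈ Set.Ioo (0 : ℝ) 1) :
    ∀ x ∈ Set.Ioo (-1 : ℝ) (-B),
      (DifferentiableAt ℝ (Ufun μ c₁ c₂ B) x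
        ∧ DifferentiableAt ℝ (deriv (Ufun μ c₁ c₂ B)) x) ∧
      μ ^ 2 / 2 * (1 - x ^ 2) ^ 2 * deriv (deriv (Ufun μ c₁ c₂ B)) x
        = -(c₁ * (1 + x)) / 2 ∧
      μ ^ 2 / 2 * (1 - x ^ 2) ^ 2 * deriv (deriv (Ufun μ c₁ c₂ B)) x
        ≥ -(c₁ * (1 - x)) / 2 := by
  intro x hx
  obtain ⟨hx1, hx2⟩ := hx
  obtain ⟨hB1, hB2⟩ := hB
  have hx2' : x < 1 := by linarith
  -- local agreement of Ufun with Vf on Ioo (-1) (-B)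
  have hagree : ∀ y ∈ Set.Ioo (-1 : ℝ) (-B), Ufun μ c₁ c₂ B y = Vf μ c₁ c₂ B y := by
    intro y hy
    obtain ⟨hy1, hy2⟩ := hy
    have hm : (0:ℝ) < 1 - y := by linarith
    have hp : (0:ℝ) < 1 + y := by linarith
    have : ¬ (-B < y) := not_lt.2 hy2.le
    simp only [Ufun, if_neg this, U₁, Vf]
    rw [show (1 : ℝ) - -y = 1 + y by ring, show (1 : ℝ) + -y = 1 - y by ring,
      Real.log_div hm.ne' hp.ne']
  -- eventual HasDerivAt statements for Ufun
  have hopen : IsOpen (Set.Ioo (-1 : ℝ) (-B)) := isOpen_Ioo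
  have hHasD : ∀ y ∈ Set.Ioo (-1 : ℝ) (-B), HasDerivAt (Ufun μ c₁ c₂ B) (Vf' μ c₁ B y) y := by
    intro y hy
    have hmem : Set.Ioo (-1 : ℝ) (-B) ∈ nhds y := hopen.mem_nhds hy
    have heq : Ufun μ c₁ c₂ B =ᶠ[nhds y] Vf μ c₁ c₂ B :=
      Filter.eventually_of_mem hmem hagree
    exact (hasDeriv_V μ c₁ c₂ B hy.1 (by have := hy.2; linarith)).congr_of_eventuallyEq heq
  have hmemx : Set.Ioo (-1 : ℝ) (-B) ∈ nhds x := hopen.mem_nhds ⟨hx1, hx2⟩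
  have heq2 : deriv (Ufun μ c₁ c₂ B) =ᶠ[nhds x] Vf' μ c₁ B :=
    Filter.eventually_of_mem hmemx (fun y hy => (hHasD y hy).deriv)
  have hHasD2 : HasDerivAt (deriv (Ufun μ c₁ c₂ B)) (Vf'' μ c₁ B x) x :=
    (hasDeriv_V' μ c₁ B hμ.ne' hx1 hx2').congr_of_eventuallyEq heq2
  have hdd : deriv (deriv (Ufun μ c₁ c₂ B)) x = Vf'' μ c₁ B x := hHasD2.deriv
  have hm : (0:ℝ) < 1 - x := by linarith
  have hp : (0:ℝ) < 1 + x := by linarith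
  have key : μ ^ 2 / 2 * (1 - x ^ 2) ^ 2 * deriv (deriv (Ufun μ c₁ c₂ B)) x
      = -(c₁ * (1 + x)) / 2 := by
    rw [hdd]
    unfold Vf''
    have hμ' : μ ≠ 0 := hμ.ne'
    field_simp
    ring
  refine ⟨⟨(hHasD x ⟨hx1, hx2⟩).differentiableAt, hHasD2.differentiableAt⟩, key, ?_⟩
  rw [key]
  have : x ≤ 0 := by linarith
  nlinarith
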